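/- Let (X,d,m) be a parabolic RCD(0,N) space and C ⊂ X × (0,+∞) a nonempty set which is locally the boundary of a locally perimeter minimizing set in X × ℝ. Let d_C be the distance from C, d_0 the signed distance from X × {0} (positive on X × (−∞,0)), and d̄ := d_C − d_0 on X × (−∞,0). If d̄ is not constant, then there exist a metric ball B ⊂ X × (−∞,0) and τ > 0 such that the minimal relaxed gradient satisfies |∇d̄|(x̄) ≥ τ for m_×-a.e. x̄ ∈ B. -/

import Mathlib

/-!
Common framework: metric measure spaces, relaxed gradients, BV/perimeter,
Cheeger energy, Sobolev spaces, Laplacians, heat kernels, parabolicity,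
a synthetic `RCD(K,N)` predicate, Green's functions, and the `L²` product
`X ×₂ ℝ` used for half-space statements.
-/

open MeasureTheory Filter Topology Set Metric
open scoped ENNReal NNReal

noncomputable section

namespace HalfSpaceRCD

variable {X : Type*}

/-- Pointwise (upper) Lipschitz constant `lip f x` of a real valued function. -/
def lipConst [PseudoMetricSpace X] (f : X → ℝ) (x : X) : ℝ≥0∞ :=
  Filter.limsup (fun y => ENNReal.ofReal (|f x - f y| / dist x y)) (𝓝[≠] x)

/-- A function is locally Lipschitz on a set `A`. -/
def LocLipOn [PseudoMetricSpace X] (f : X → ℝ) (A : Set X) : Prop :=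
  ∀ x ∈ A, ∃ ε : ℝ, 0 < ε ∧ ∃ K : ℝ≥0, LipschitzOnWith K f (Metric.ball x ε ∩ A)

/-- Lipschitz functions with compact support contained in `A`
(the class `Lip_c(A)`). -/
def LipCompactIn [PseudoMetricSpace X] (f : X → ℝ) (A : Set X) : Prop :=
  (∃ K : ℝ≥0, LipschitzWith K f) ∧ HasCompactSupport f ∧ tsupport f ⊆ A

variable [MetricSpace X] [MeasurableSpace X]

/-- Relaxed total variation `|Df|(A)` of `f : X → ℝ` on a set `A`, obtained by
relaxation of `∫_A lip g dμ` along locally Lipschitz approximations `g → f` in `L¹(A)`. -/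
def variationOn (μ : Measure X) (f : X → ℝ) (A : Set X) : ℝ≥0∞ :=
  sInf { v : ℝ≥0∞ | ∃ g : ℕ → X → ℝ, (∀ n, LocLipOn (g n) A) ∧
    Tendsto (fun n => ∫⁻ x in A, ENNReal.ofReal |g n x - f x| ∂μ) atTop (𝓝 0) ∧
    v = Filter.liminf (fun n => ∫⁻ x in A, lipConst (g n) x ∂μ) atTop }

/-- Relaxed `2`-Cheeger energy of `f` on a set `A`. -/
def cheegerOn (μ : Measure X) (f : X → ℝ) (A : Set X) : ℝ≥0∞ :=
  sInf { v : ℝ≥0∞ | ∃ g : ℕ → X → ℝ, (∀ n, LocLipOn (g n) A) ∧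
    Tendsto (fun n => ∫⁻ x in A, (ENNReal.ofReal |g n x - f x|) ^ 2 ∂μ) atTop (𝓝 0) ∧
    v = Filter.liminf (fun n => ∫⁻ x in A, (lipConst (g n) x) ^ 2 ∂μ) atTop }

/-- Membership in the Sobolev space `W^{1,2}(A)`. -/
def MemW12 (μ : Measure X) (f : X → ℝ) (A : Set X) : Prop :=
  MemLp f 2 (μ.restrict A) ∧ cheegerOn μ f A < ⊤

/-- Membership in `W^{1,2}_0(A)`: approximable by `Lip_c(A)` functions in energy. -/
def MemW120 (μ : Measure X) (f : X → ℝ) (A : Set X) : Prop :=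
  MemW12 μ f A ∧ ∃ g : ℕ → X → ℝ, (∀ n, LipCompactIn (g n) A) ∧
    Tendsto (fun n => ∫⁻ x in A, (ENNReal.ofReal |g n x - f x|) ^ 2 ∂μ) atTop (𝓝 0) ∧
    Tendsto (fun n => cheegerOn μ (fun x => g n x - f x) A) atTop (𝓝 0)

/-- Membership in `W^{1,1}(A)`: integrable, of bounded variation, and the variation
measure is absolutely continuous w.r.t. `μ` (it has an integrable density). -/
def MemW11 (μ : Measure X) (f : X → ℝ) (A : Set X) : Prop :=
  IntegrableOn f A μ ∧ ∃ G : X → ℝ, (∀ x, 0 ≤ G x) ∧ IntegrableOn G A μ ∧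
    ∀ U : Set X, U ⊆ A → IsOpen U → variationOn μ f U = ∫⁻ x in U, ENNReal.ofReal (G x) ∂μ

/-- Membership in `W^{1,1}_0(A)`. -/
def MemW110 (μ : Measure X) (f : X → ℝ) (A : Set X) : Prop :=
  MemW11 μ f A ∧ ∃ g : ℕ → X → ℝ, (∀ n, LipCompactIn (g n) A) ∧
    Tendsto (fun n => ∫⁻ x in A, ENNReal.ofReal |g n x - f x| ∂μ) atTop (𝓝 0) ∧
    Tendsto (fun n => variationOn μ (fun x => g n x - f x) A) atTop (𝓝 0)

/-- Membership in `W^{1,1}_loc(X)`. -/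
def MemW11Loc (μ : Measure X) (f : X → ℝ) : Prop :=
  ∀ (x : X) (r : ℝ), 0 < r → MemW11 μ f (Metric.ball x r)

/-- The pointwise pairing `∇f ⋅ ∇g` defined by polarization of slopes. -/
def gradPairing (f g : X → ℝ) (x : X) : ℝ :=
  ((lipConst (fun y => f y + g y) x).toReal ^ 2
    - (lipConst (fun y => f y - g y) x).toReal ^ 2) / 4

/-- `f ∈ D(Δ, B)` with `Δ f = h` on `B`. -/
def HasLaplacianOn (μ : Measure X) (f h : X → ℝ) (B : Set X) : Prop :=
  MemW12 μ f B ∧ MemLp h 2 (μ.restrict B) ∧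
    ∀ g : X → ℝ, MemW120 μ g B →
      ∫ y in B, g y * h y ∂μ = -∫ y in B, gradPairing g f y ∂μ

/-! ## The synthetic `RCD(K,N)` condition -/

/-- The coefficient `s_{K,N}(t)` of the model space. -/
def modelCoeff (K N t : ℝ) : ℝ :=
  if 0 < K then Real.sqrt ((N - 1) / K) * Real.sin (t * Real.sqrt (K / (N - 1)))
  else if K = 0 then t
  else Real.sqrt ((N - 1) / (-K)) * Real.sinh (t * Real.sqrt ((-K) / (N - 1)))

/-- The model volume `V_{K,N}(r)` (up to the constant `N ω_N`). -/
def modelVolume (K N r : ℝ) : ℝ := ∫ t in (0:ℝ)..r, modelCoeff K N t ^ (N - 1)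

/-- Synthetic encoding of the `RCD(K,N)` condition on a metric measure space:
a complete, proper, geodesic metric measure space with measure finite on bounded
sets and of full support, which is infinitesimally Hilbertian (the `2`-Cheeger
energy satisfies the parallelogram identity) and satisfies the sharp
Bishop–Gromov volume comparison of the curvature-dimension condition `CD(K,N)`. -/
structure IsRCD (K N : ℝ) {X : Type*} [MetricSpace X] [MeasurableSpace X]
    (μ : Measure X) : Prop where
  one_le_dim : 1 ≤ N
  complete : CompleteSpace X
  proper : ProperSpace X
  geodesic : ∀ x y : X, ∃ z : X, dist x z = dist x y / 2 ∧ dist z y = dist x y / 2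
  finiteOnBounded : ∀ (x : X) (r : ℝ), μ (Metric.ball x r) < ⊤
  fullSupport : ∀ (x : X) (r : ℝ), 0 < r → 0 < μ (Metric.ball x r)
  infHilbertian : ∀ f g : X → ℝ, MemLp f 2 μ → MemLp g 2 μ →
    cheegerOn μ (fun x => f x + g x) Set.univ + cheegerOn μ (fun x => f x - g x) Set.univ
      = 2 * cheegerOn μ f Set.univ + 2 * cheegerOn μ g Set.univ
  bishopGromov : ∀ (x : X) (r R : ℝ), 0 < r → r ≤ R →
    μ (Metric.ball x R) * ENNReal.ofReal (modelVolume K N r)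
      ≤ μ (Metric.ball x r) * ENNReal.ofReal (modelVolume K N R)

/-! ## Heat kernel and parabolicity -/

/-- `p` is the heat kernel of the metric measure space `(X, d, μ)`: a symmetric,
measurable, stochastically complete kernel satisfying the Chapman–Kolmogorov
identity, whose associated semigroup `P_t f(x) = ∫ p_t(x,y) f(y) dμ(y)` is the
`L²`-gradient flow of the Cheeger energy. -/
structure IsHeatKernel {X : Type*} [MetricSpace X] [MeasurableSpace X] (μ : Measure X)
    (p : ℝ → X → X → ℝ) : Prop where
  nonneg : ∀ t x y, 0 < t → 0 ≤ p t x y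
  symm : ∀ t x y, p t x y = p t y x
  meas : ∀ t : ℝ, Measurable fun q : X × X => p t q.1 q.2
  timeCont : ∀ x y, ContinuousOn (fun t => p t x y) (Set.Ioi (0:ℝ))
  chapman : ∀ s t : ℝ, 0 < s → 0 < t → ∀ x y, p (s + t) x y = ∫ z, p s x z * p t z y ∂μ
  stochasticallyComplete : ∀ t : ℝ, 0 < t → ∀ x, ∫ y, p t x y ∂μ = 1
  l2Approx : ∀ f : X → ℝ, LipCompactIn f Set.univ →
    Tendsto (fun t : ℝ => ∫ x, ((∫ y, p t x y * f y ∂μ) - f x) ^ 2 ∂μ) (𝓝[>] (0:ℝ)) (𝓝 0)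
  gradientFlow : ∀ f g : X → ℝ, LipCompactIn f Set.univ → LipCompactIn g Set.univ →
    ∀ t : ℝ, 0 < t →
      HasDerivAt (fun s : ℝ => ∫ x, (∫ y, p s x y * f y ∂μ) * g x ∂μ)
        (-(((cheegerOn μ (fun x => (∫ y, p t x y * f y ∂μ) + g x) Set.univ).toReal -
            (cheegerOn μ (fun x => (∫ y, p t x y * f y ∂μ) - g x) Set.univ).toReal) / 4)) t

/-- A metric measure space with heat kernel `p` is parabolic if
`∫_1^∞ p_t(x,y) dt = +∞` for every pair of points. -/
def Parabolic {X : Type*} [MetricSpace X] [MeasurableSpace X] (μ : Measure X)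
    (p : ℝ → X → X → ℝ) : Prop :=
  ∀ x y : X, ∫⁻ t in Set.Ioi (1:ℝ), ENNReal.ofReal (p t x y) = ⊤

/-! ## Sets of finite perimeter and minimizers -/

/-- Perimeter of `E` relative to `A`, i.e. the total variation of `1_E` on `A`. -/
def perimeter (μ : Measure X) (E A : Set X) : ℝ≥0∞ :=
  variationOn μ (Set.indicator E fun _ => (1:ℝ)) A

/-- `s` is compactly contained in `t` (`s ⋐ t`). -/
def CompactlyContained [TopologicalSpace X] (s t : Set X) : Prop :=
  IsCompact (closure s) ∧ closure s ⊆ t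

/-- The symmetric difference of two sets. -/
def symmDiffSet (E F : Set X) : Set X := (E \ F) ∪ (F \ E)

/-- `E` is perimeter minimizing in the open set `Ω`. -/
def PerimMinimizingIn (μ : Measure X) (E Ω : Set X) : Prop :=
  E ⊆ Ω ∧ (∀ x ∈ Ω, ∀ r : ℝ, 0 < r → perimeter μ E (Metric.ball x r ∩ Ω) < ⊤) ∧
    ∀ x ∈ Ω, ∀ r : ℝ, 0 < r → ∀ F : Set X, F ⊆ Ω →
      CompactlyContained (symmDiffSet F E) (Metric.ball x r ∩ Ω) →
      perimeter μ E (Metric.ball x r ∩ Ω) ≤ perimeter μ F (Metric.ball x r ∩ Ω)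

/-- `E` is (globally) perimeter minimizing. -/
def PerimMinimizing (μ : Measure X) (E : Set X) : Prop :=
  PerimMinimizingIn μ E Set.univ

/-- `E` is locally perimeter minimizing in the open set `Ω`. -/
def LocPerimMinimizingIn (μ : Measure X) (E Ω : Set X) : Prop :=
  E ⊆ Ω ∧ (∀ x ∈ Ω, ∀ r : ℝ, 0 < r → perimeter μ E (Metric.ball x r ∩ Ω) < ⊤) ∧
    ∀ x ∈ Ω, ∃ r : ℝ, 0 < r ∧ ∀ F : Set X, F ⊆ Ω →
      CompactlyContained (symmDiffSet F E) (Metric.ball x r ∩ Ω) →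
      perimeter μ E (Metric.ball x r ∩ Ω) ≤ perimeter μ F (Metric.ball x r ∩ Ω)

/-- `C` is locally the boundary of a locally perimeter minimizing set: every point has
an open neighbourhood `U` and a set `E ⊆ U` (open representative) locally minimizing
the perimeter in `U` with `C ∩ U = ∂E ∩ U`. -/
def IsLocalMinimizingBoundary (μ : Measure X) (C : Set X) : Prop :=
  ∀ x : X, ∃ U : Set X, IsOpen U ∧ x ∈ U ∧ ∃ E : Set X, E ⊆ U ∧ IsOpen E ∧
    LocPerimMinimizingIn μ E U ∧ C ∩ U = frontier E ∩ U

/-- `S` is an area minimizing boundary in the open set `A`. -/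
def IsAreaMinBoundary (μ : Measure X) (S A : Set X) : Prop :=
  ∃ E : Set X, E ⊆ A ∧ PerimMinimizingIn μ E A ∧ frontier E ∩ A = S

/-! ## Regular sets and Green's functions -/

/-- An open precompact set `B` with `closure B ≠ X` is regular if the Dirichlet
problem for harmonic functions with continuous boundary data is solvable on `B`. -/
def IsRegularSet (μ : Measure X) (B : Set X) : Prop :=
  IsOpen B ∧ IsCompact (closure B) ∧ closure B ≠ Set.univ ∧
    ∀ f : X → ℝ, MemW12 μ f B → ContinuousOn f (frontier B) →
      ∃ u : X → ℝ, HasLaplacianOn μ u (fun _ => 0) B ∧ ContinuousOn u (closure B) ∧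
        MemW120 μ (fun y => u y - f y) B ∧ Set.EqOn u f (frontier B)

/-- An exhaustion of `X` by regular sets. -/
def IsRegularExhaustion (μ : Measure X) (B : ℕ → Set X) : Prop :=
  (∀ i, IsRegularSet μ (B i)) ∧ (∀ i, CompactlyContained (B i) (B (i + 1))) ∧
    (⋃ i, B i) = Set.univ

/-- `G` is a Green's function on the regular set `B` with pole `x`:
`G ∈ W^{1,1}_0(B) ∩ C(closure B \ {x})`, `Δ G = -δ_x` in the distributional sense in
`B`, and `G = 0` on `∂B`. -/
structure IsGreenOn (μ : Measure X) (B : Set X) (x : X) (G : X → ℝ) : Prop where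
  mem : MemW110 μ G B
  cont : ContinuousOn G (closure B \ {x})
  deltaEq : ∀ g : X → ℝ, LipCompactIn g B → ∫ z in B, gradPairing g G z ∂μ = g x
  bdry : Set.EqOn G 0 (frontier B)

/-- `G` is a Green's function on `X` with pole `x`:
`G ∈ W^{1,1}_loc(X) ∩ C(X \ {x})` and `Δ G = -δ_x` in the distributional sense. -/
structure IsGreenGlobal (μ : Measure X) (x : X) (G : X → ℝ) : Prop where
  mem : MemW11Loc μ G
  cont : ContinuousOn G {x}ᶜ
  deltaEq : ∀ g : X → ℝ, LipCompactIn g Set.univ → ∫ z, gradPairing g G z ∂μ = g x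

/-! ## The `L²` product of two metric measure spaces -/

instance l2ProdMeasurableSpace {α β : Type*} [MeasurableSpace α] [MeasurableSpace β] :
    MeasurableSpace (WithLp 2 (α × β)) :=
  MeasurableSpace.comap WithLp.ofLp (inferInstanceAs (MeasurableSpace (α × β)))

/-- The product measure on the `L²` product. -/
def l2prodMeasure {α β : Type*} [MeasurableSpace α] [MeasurableSpace β]
    (μ : Measure α) (ν : Measure β) : Measure (WithLp 2 (α × β)) :=
  Measure.map (WithLp.toLp 2) (μ.prod ν : Measure (α × β))

/-- First coordinate of a point of the `L²` product. -/
def fst2 {α β : Type*} (q : WithLp 2 (α × β)) : α := (WithLp.equiv 2 (α × β) q).1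

/-- Second coordinate of a point of the `L²` product. -/
def snd2 {α β : Type*} (q : WithLp 2 (α × β)) : β := (WithLp.equiv 2 (α × β) q).2

/-- The point `(a, b)` of the `L²` product. -/
def mk2 {α β : Type*} (a : α) (b : β) : WithLp 2 (α × β) :=
  (WithLp.equiv 2 (α × β)).symm (a, b)

instance l2ProdBorelSpace {α β : Type*} [MetricSpace α] [MetricSpace β]
    [MeasurableSpace α] [MeasurableSpace β] [BorelSpace α] [BorelSpace β]
    [SecondCountableTopology α] [SecondCountableTopology β] :
    BorelSpace (WithLp 2 (α × β)) :=
  ⟨(WithLp.borelSpace 2 α β).measurable_eq⟩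

/-! ## Weighted Riemannian manifolds, minimality, moduli of parabolicity -/

/-- Weighted area functional: the `d`-dimensional Hausdorff measure weighted by `w`. -/
def wArea {P : Type*} [MetricSpace P] [MeasurableSpace P] [BorelSpace P]
    (d : ℝ) (w : P → ℝ) (A : Set P) : ℝ≥0∞ :=
  ∫⁻ x in A, ENNReal.ofReal (w x) ∂(μH[d])

/-- Synthetic encoding of an `n`-dimensional weighted Riemannian manifold
`(M, d_g, e^{-V} m_g)` with boundary `Bd`: the measure is the `n`-dimensional
Hausdorff measure with the continuous weight `e^{-V}`, the distance is geodesic,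
and around any point the space is `(1+δ)`-bi-Lipschitz to a subset of `ℝⁿ`
at every scale `δ`. -/
structure IsWeightedManifoldMM (n : ℕ) (M : Type*) [MetricSpace M] [MeasurableSpace M]
    [BorelSpace M] (ν : Measure M) (V : M → ℝ) (Bd : Set M) : Prop where
  weightCont : Continuous V
  measure_eq : ν = (μH[(n : ℝ)] : Measure M).withDensity fun x => ENNReal.ofReal (Real.exp (-V x))
  bd_closed : IsClosed Bd
  geodesic : ∀ x y : M, ∃ z : M, dist x z = dist x y / 2 ∧ dist z y = dist x y / 2
  charts : ∀ x : M, ∀ δ : ℝ, 0 < δ → ∃ ε : ℝ, 0 < ε ∧ ∃ f : M → EuclideanSpace ℝ (Fin n),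
    (∀ y ∈ Metric.ball x ε, ∀ z ∈ Metric.ball x ε,
      dist y z / (1 + δ) ≤ dist (f y) (f z) ∧ dist (f y) (f z) ≤ (1 + δ) * dist y z) ∧
    (x ∉ Bd → Metric.ball x ε ∩ Bd = ∅)

/-- A hypersurface `S` is minimal with free boundary on `Bd` (equivalently, it is a
critical point of the `d`-dimensional weighted area functional with weight `w`
among deformations preserving `Bd`): for every compactly supported bi-Lipschitz
deformation family `Φ_t` with `Φ_0 = id` preserving `Bd`, the weighted area of
`Φ_t '' S` has vanishing derivative at `t = 0`. -/
def IsMinimalFreeBoundary {P : Type*} [MetricSpace P] [MeasurableSpace P] [BorelSpace P]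
    (d : ℝ) (w : P → ℝ) (Bd : Set P) (S : Set P) : Prop :=
  ∀ (Φ : ℝ → P → P) (Kc : Set P), IsCompact Kc →
    Φ 0 = id →
    (∀ (t : ℝ) (y : P), y ∉ Kc → Φ t y = y) →
    (∀ t : ℝ, Function.Bijective (Φ t)) →
    (∃ L : ℝ≥0, ∀ t ∈ Set.Icc (-1:ℝ) 1, LipschitzWith L (Φ t)) →
    (∃ L : ℝ≥0, ∀ y : P, LipschitzWith L fun t => Φ t y) →
    (∀ t : ℝ, Φ t '' Bd ⊆ Bd) →
    deriv (fun t : ℝ => (wArea d w (Φ t '' S ∩ Kc)).toReal) 0 = 0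

/-- `P` is a modulus of parabolicity. -/
def ModulusOfParabolicity (P : ℝ → ℝ) : Prop :=
  (∀ t : ℝ, 0 ≤ t → 0 < P t) ∧ ∫⁻ t in Set.Ioi (1:ℝ), ENNReal.ofReal (t / P t) = ⊤

/-- The oscillation `Osc_{x,r}(S)` of a set `S ⊆ M ×₂ ℝ` through `(x,0)`. -/
def Osc {M : Type*} [MetricSpace M] (x : M) (r : ℝ) (S : Set (WithLp 2 (M × ℝ))) : ℝ :=
  sSup { a : ℝ | ∃ q ∈ S, fst2 q ∈ Metric.ball x r ∧ snd2 q ∈ Set.Ioo (-r) r ∧ a = |snd2 q| }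

/-- Upper oscillation `Osc⁺_{x,r}(S)`. -/
def OscPlus {M : Type*} [MetricSpace M] (x : M) (r : ℝ) (S : Set (WithLp 2 (M × ℝ))) : ℝ :=
  sSup { a : ℝ | ∃ q ∈ S, fst2 q ∈ Metric.ball x r ∧ snd2 q ∈ Set.Ioo 0 r ∧ a = |snd2 q| }


/-! ## Auxiliary lemmas for the gradient lower bound -/

section GradientAux

variable {X : Type*} [MetricSpace X]

private lemma le_infDist' {Y : Type*} [MetricSpace Y] {s : Set Y} (hs : s.Nonempty)
    {x : Y} {b : ℝ} (h : ∀ y ∈ s, b ≤ dist x y) : b ≤ Metric.infDist x s := by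
  by_contra hb
  push_neg at hb
  obtain ⟨y, hy, hlt⟩ := (Metric.infDist_lt_iff hs).1 hb
  exact absurd (h y hy) (not_le.2 hlt)

private lemma dist_l2 (q q' : WithLp 2 (X × ℝ)) :
    dist q q' = Real.sqrt (dist (fst2 q) (fst2 q') ^ 2 + (snd2 q - snd2 q') ^ 2) := by
  have h := WithLp.prod_dist_eq_add (p := 2) (α := X) (β := ℝ) (by norm_num) q q'
  rw [h, show ((2:ℝ≥0∞).toReal) = ((2:ℕ):ℝ) by norm_num, Real.rpow_natCast, Real.rpow_natCast,
    Real.sqrt_eq_rpow]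
  norm_num
  congr 1
  rw [Real.dist_eq, sq_abs]
  rfl

private lemma dist_sq_l2 (q q' : WithLp 2 (X × ℝ)) :
    dist q q' ^ 2 = dist (fst2 q) (fst2 q') ^ 2 + (snd2 q - snd2 q') ^ 2 := by
  rw [dist_l2, Real.sq_sqrt (by positivity)]

private lemma snd2_sub_le_dist (q q' : WithLp 2 (X × ℝ)) : |snd2 q - snd2 q'| ≤ dist q q' := by
  have h := dist_sq_l2 q q'
  have h1 : (0:ℝ) ≤ dist q q' := dist_nonneg
  have h2 : (0:ℝ) ≤ dist (fst2 q) (fst2 q') := dist_nonneg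
  have h3 : |snd2 q - snd2 q'| ^ 2 ≤ dist q q' ^ 2 := by rw [sq_abs]; nlinarith
  nlinarith [abs_nonneg (snd2 q - snd2 q')]

private lemma dist_fst2_le_dist (q q' : WithLp 2 (X × ℝ)) :
    dist (fst2 q) (fst2 q') ≤ dist q q' := by
  have h := dist_sq_l2 q q'
  have h1 : (0:ℝ) ≤ dist q q' := dist_nonneg
  have h2 : (0:ℝ) ≤ dist (fst2 q) (fst2 q') := dist_nonneg
  nlinarith [sq_nonneg (snd2 q - snd2 q')]

private lemma dist_mk2_vert (x : X) (a b : ℝ) : dist (mk2 x a) (mk2 x b) = |a - b| := by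
  rw [dist_l2]
  have h1 : fst2 (mk2 x a) = x := rfl
  have h2 : fst2 (mk2 x b) = x := rfl
  have h3 : snd2 (mk2 x a) = a := rfl
  have h4 : snd2 (mk2 x b) = b := rfl
  rw [h1, h2, h3, h4, dist_self]
  rw [show (0:ℝ) ^ 2 + (a - b) ^ 2 = (a - b) ^ 2 by ring, Real.sqrt_sq_eq_abs]

private lemma le_of_sq_le_sq'' {a b : ℝ} (h : a ^ 2 ≤ b ^ 2) (hb : 0 ≤ b) : a ≤ b := by
  nlinarith [sq_nonneg (a - b), sq_nonneg (a + b)]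

private lemma mk2_eta (q : WithLp 2 (X × ℝ)) : mk2 (fst2 q) (snd2 q) = q := rfl

end GradientAux

set_option maxHeartbeats 2000000 in
/-- **Gradient lower bound for a non-constant `d̄`.** Let `(X,d,m)` be a parabolic
`RCD(0,N)` space, `C ⊆ X × (0,∞)` nonempty and locally the boundary of a locally
perimeter minimizing set, and `d̄ := d_C - d_0` on `X × (-∞,0)` (where `d_0` is the
signed distance from `X × {0}`, positive on the lower half-space, so that
`d̄(x,s) = d_C(x,s) + s` for `s < 0`). If `d̄` is not constant, then there are a
ball `B ⊆ X × (-∞,0)` and `τ > 0` with `|∇ d̄| ≥ τ` a.e. on `B`. -/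
theorem gradientLowerBound {X : Type*} [MetricSpace X] [MeasurableSpace X] [BorelSpace X]
    [SecondCountableTopology X]
    (μ : Measure X) (N : ℝ) (hRCD : IsRCD 0 N μ)
    (p : ℝ → X → X → ℝ) (hp : IsHeatKernel μ p) (hpar : Parabolic μ p)
    (C : Set (WithLp 2 (X × ℝ))) (hne : C.Nonempty)
    (hsub : C ⊆ {q | 0 < snd2 q})
    (hC : IsLocalMinimizingBoundary (l2prodMeasure μ volume) C)
    (hnc : ¬ ∃ c : ℝ, ∀ q : WithLp 2 (X × ℝ), snd2 q < 0 →
      Metric.infDist q C + snd2 q = c) :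
    ∃ xb : WithLp 2 (X × ℝ), ∃ ρ τ : ℝ, 0 < ρ ∧ 0 < τ ∧
      Metric.ball xb ρ ⊆ {q | snd2 q < 0} ∧
      ∀ᵐ q ∂((l2prodMeasure μ volume).restrict (Metric.ball xb ρ)),
        ENNReal.ofReal τ ≤ lipConst (fun q' => Metric.infDist q' C + snd2 q') q := by
  classical
  -- `infDist q C ≥ -snd2 q` on the lower half-space
  have hD : ∀ q : WithLp 2 (X × ℝ), snd2 q < 0 → -snd2 q ≤ Metric.infDist q C := by
    intro q hq
    refine le_infDist' hne fun c hc => ?_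
    have h1 : |snd2 q - snd2 c| ≤ dist q c := snd2_sub_le_dist q c
    have h2 : 0 < snd2 c := hsub hc
    have h3 : snd2 c - snd2 q ≤ |snd2 q - snd2 c| := by
      rw [abs_sub_comm]; exact le_abs_self _
    linarith
  by_cases hV : ∀ q : WithLp 2 (X × ℝ), snd2 q < 0 →
      mk2 (fst2 q) (snd2 q + Metric.infDist q C) ∈ closure C
  · -- vertical case: `d̄` is constant, contradiction
    exfalso
    apply hnc
    obtain ⟨F, hF⟩ : ∃ F : X → ℝ → ℝ, F = fun x s => Metric.infDist (mk2 x s) C + s :=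
      ⟨_, rfl⟩
    have hsnd : ∀ (x : X) (s : ℝ), snd2 (mk2 x s) = s := fun _ _ => rfl
    have hDx : ∀ (x : X) (s : ℝ), s < 0 → -s ≤ Metric.infDist (mk2 x s) C := by
      intro x s hs
      have := hD (mk2 x s) (by rw [hsnd]; exact hs)
      rwa [hsnd] at this
    have hmono : ∀ (x : X) (s s' : ℝ), s < 0 → s' < 0 → F x s' ≤ F x s := by
      intro x s s' hs hs'
      set D := Metric.infDist (mk2 x s) C with hDdef
      have hD0 : -s ≤ D := hDx x s hs
      have hv : mk2 x (s + D) ∈ closure C := by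
        have := hV (mk2 x s) (by rw [hsnd]; exact hs)
        exact this
      have h1 : Metric.infDist (mk2 x s') C ≤ dist (mk2 x s') (mk2 x (s + D)) := by
        rw [← Metric.infDist_closure]
        exact Metric.infDist_le_dist_of_mem hv
      rw [dist_mk2_vert, abs_of_nonpos (by linarith)] at h1
      simp only [hF]
      linarith
    have heqs : ∀ (x : X) (s s' : ℝ), s < 0 → s' < 0 → F x s = F x s' :=
      fun x s s' hs hs' => le_antisymm (hmono x s' s hs' hs) (hmono x s s' hs hs')
    have hxy : ∀ x y : X, F x (-1) ≤ F y (-1) := by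
      intro x y
      by_contra hlt
      push_neg at hlt
      obtain ⟨ε, hε⟩ : ∃ e : ℝ, e = (F x (-1) - F y (-1)) / 2 := ⟨_, rfl⟩
      have hε0 : 0 < ε := by rw [hε]; linarith
      obtain ⟨d, hd⟩ : ∃ d : ℝ, d = dist x y := ⟨_, rfl⟩
      obtain ⟨s, hs⟩ : ∃ s : ℝ, s = -max 1 (d ^ 2 / (2 * ε) + 1) := ⟨_, rfl⟩
      have hs0 : s < 0 := by
        have : (1:ℝ) ≤ max 1 (d ^ 2 / (2 * ε) + 1) := le_max_left _ _
        rw [hs]; linarith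
      have hsbig : d ^ 2 / (2 * ε) + 1 ≤ -s := by
        rw [hs, neg_neg]; exact le_max_right _ _
      obtain ⟨Dy, hDy⟩ : ∃ D : ℝ, D = Metric.infDist (mk2 y s) C := ⟨_, rfl⟩
      have hDy1 : -s ≤ Dy := hDy ▸ hDx y s hs0
      have hDy0 : 0 < Dy := lt_of_lt_of_le (by linarith) hDy1
      have hw : mk2 y (s + Dy) ∈ closure C := by
        rw [hDy]
        exact hV (mk2 y s) hs0
      have h1 : Metric.infDist (mk2 x s) C ≤ dist (mk2 x s) (mk2 y (s + Dy)) := by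
        rw [← Metric.infDist_closure]
        exact Metric.infDist_le_dist_of_mem hw
      have h2 : dist (mk2 x s) (mk2 y (s + Dy)) = Real.sqrt (d ^ 2 + Dy ^ 2) := by
        rw [dist_l2]
        have e1 : fst2 (mk2 x s) = x := rfl
        have e2 : fst2 (mk2 y (s + Dy)) = y := rfl
        have e3 : snd2 (mk2 x s) = s := rfl
        have e4 : snd2 (mk2 y (s + Dy)) = s + Dy := rfl
        rw [e1, e2, e3, e4, hd]
        congr 1
        ring
      have h3 : Real.sqrt (d ^ 2 + Dy ^ 2) ≤ Dy + d ^ 2 / (2 * Dy) := by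
        have hsq : d ^ 2 + Dy ^ 2 ≤ (Dy + d ^ 2 / (2 * Dy)) ^ 2 := by
          have hexp : (Dy + d ^ 2 / (2 * Dy)) ^ 2
              = d ^ 2 + Dy ^ 2 + (d ^ 2 / (2 * Dy)) ^ 2 := by
            field_simp
            ring
          nlinarith [sq_nonneg (d ^ 2 / (2 * Dy))]
        calc Real.sqrt (d ^ 2 + Dy ^ 2) ≤ Real.sqrt ((Dy + d ^ 2 / (2 * Dy)) ^ 2) :=
              Real.sqrt_le_sqrt hsq
          _ = Dy + d ^ 2 / (2 * Dy) := Real.sqrt_sq (by positivity)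
      have h4 : d ^ 2 / (2 * Dy) ≤ ε := by
        rw [div_le_iff₀ (by positivity)]
        have : d ^ 2 / (2 * ε) + 1 ≤ Dy := le_trans hsbig hDy1
        have h5 : d ^ 2 ≤ 2 * ε * (d ^ 2 / (2 * ε) + 1) := by
          rw [mul_add, mul_div_cancel₀ _ (by positivity : (2:ℝ) * ε ≠ 0)]
          linarith
        calc d ^ 2 ≤ 2 * ε * (d ^ 2 / (2 * ε) + 1) := h5
          _ ≤ ε * (2 * Dy) := by nlinarith [mul_le_mul_of_nonneg_left this (le_of_lt hε0)]
      have hFx : F x s ≤ F y s + ε := by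
        have h6 : Metric.infDist (mk2 x s) C ≤ Dy + d ^ 2 / (2 * Dy) := by
          refine le_trans h1 ?_
          rw [h2]
          exact h3
        have h7 : F x s = Metric.infDist (mk2 x s) C + s := by simp only [hF]
        have h8 : F y s = Dy + s := by simp only [hF]; rw [← hDy]
        rw [h7, h8]
        linarith
      rw [← heqs x (-1) s (by norm_num) hs0, ← heqs y (-1) s (by norm_num) hs0] at hFx
      rw [hε] at hFx
      linarith
    have heqxy : ∀ x y : X, F x (-1) = F y (-1) :=
      fun x y => le_antisymm (hxy x y) (hxy y x)
    obtain ⟨c₀, hc₀⟩ := hne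
    refine ⟨F (fst2 c₀) (-1), fun q hq => ?_⟩
    have h1 : Metric.infDist q C + snd2 q = F (fst2 q) (snd2 q) := by
      simp only [hF, mk2_eta]
    rw [h1, heqs (fst2 q) (snd2 q) (-1) hq (by norm_num), heqxy (fst2 q) (fst2 c₀)]
  · -- main case : some vertical point misses `closure C`
    push_neg at hV
    obtain ⟨qb, hsb, hvb⟩ := hV
    obtain ⟨Db, hDbdef⟩ : ∃ r : ℝ, r = Metric.infDist qb C := ⟨_, rfl⟩
    have hDb0 : 0 < Db := by
      rw [hDbdef]; linarith [hD qb hsb]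
    have hDbneg : -snd2 qb ≤ Db := by rw [hDbdef]; exact hD qb hsb
    obtain ⟨vb, hvbdef⟩ : ∃ v : WithLp 2 (X × ℝ), v = mk2 (fst2 qb) (snd2 qb + Db) := ⟨_, rfl⟩
    have hvb' : vb ∉ closure C := by rw [hvbdef, hDbdef]; exact hvb
    have hρ0 : 0 < Metric.infDist vb C := by
      have h2 := (isClosed_closure.notMem_iff_infDist_pos hne.closure).1 hvb'
      rwa [Metric.infDist_closure] at h2
    obtain ⟨ρ₁, hρ₁def⟩ : ∃ r : ℝ, r = min (Metric.infDist vb C) Db := ⟨_, rfl⟩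
    have hρ₁pos : 0 < ρ₁ := by rw [hρ₁def]; exact lt_min hρ0 hDb0
    have hρ₁D : ρ₁ ≤ Db := by rw [hρ₁def]; exact min_le_right _ _
    have hρ₁v : ∀ c ∈ C, ρ₁ ≤ dist vb c := fun c hc =>
      le_trans (by rw [hρ₁def]; exact min_le_left _ _) (Metric.infDist_le_dist_of_mem hc)
    -- horizontal offset at `qb`
    have hoff : ∀ c ∈ C, dist qb c ≤ Db + ρ₁ / 4 → ρ₁ / 4 ≤ dist (fst2 qb) (fst2 c) := by
      intro c hc hle
      by_contra hcon
      push_neg at hcon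
      have e1 : dist qb c ^ 2 = dist (fst2 qb) (fst2 c) ^ 2 + (snd2 qb - snd2 c) ^ 2 :=
        dist_sq_l2 qb c
      have e2 : dist vb c ^ 2 = dist (fst2 qb) (fst2 c) ^ 2 + (snd2 qb + Db - snd2 c) ^ 2 := by
        rw [hvbdef]; exact dist_sq_l2 _ c
      have hrlow : Db ≤ dist qb c := hDbdef ▸ Metric.infDist_le_dist_of_mem hc
      have hvge : ρ₁ ≤ dist vb c := hρ₁v c hc
      have hu : 0 < snd2 c - snd2 qb := by
        have := hsub hc; simp only [Set.mem_setOf_eq] at this; linarith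
      have ha0 : (0:ℝ) ≤ dist (fst2 qb) (fst2 c) := dist_nonneg
      have hr0 : (0:ℝ) ≤ dist qb c := dist_nonneg
      have hu_sq : (snd2 c - snd2 qb) ^ 2 ≤ dist qb c ^ 2 := by
        nlinarith [e1, sq_nonneg (dist (fst2 qb) (fst2 c))]
      have hu_le : snd2 c - snd2 qb ≤ dist qb c := le_of_sq_le_sq'' hu_sq hr0
      have hup : snd2 c - snd2 qb - Db ≤ ρ₁ / 4 := by linarith
      have hDbr : Db ^ 2 ≤ dist qb c ^ 2 := pow_le_pow_left₀ hDb0.le hrlow 2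
      have ha2 : dist (fst2 qb) (fst2 c) ^ 2 < (ρ₁ / 4) ^ 2 := by nlinarith [hcon, ha0]
      have h1 : (Db - (snd2 c - snd2 qb)) * (Db + (snd2 c - snd2 qb)) ≤ (ρ₁ / 4) ^ 2 := by
        nlinarith [e1, hDbr, ha2]
      have h2 : ρ₁ ≤ Db + (snd2 c - snd2 qb) := by linarith
      have hlow : Db - (snd2 c - snd2 qb) ≤ ρ₁ / 4 := by
        nlinarith [h1, h2, hρ₁pos, hu]
      have hmid : (snd2 qb + Db - snd2 c) ^ 2 ≤ (ρ₁ / 4) ^ 2 :=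
        sq_le_sq' (by linarith) (by linarith)
      have hvsq : dist vb c ^ 2 < ρ₁ ^ 2 := by nlinarith [e2, ha2, hmid, hρ₁pos]
      have : ρ₁ ^ 2 ≤ dist vb c ^ 2 := pow_le_pow_left₀ hρ₁pos.le hvge 2
      linarith
    -- radius of the good ball
    obtain ⟨ρ, hρdef⟩ : ∃ r : ℝ, r = min (ρ₁ / 16) (min (-snd2 qb / 2) (Db / 4)) := ⟨_, rfl⟩
    have hρpos : 0 < ρ := by
      rw [hρdef]
      exact lt_min (by positivity) (lt_min (by linarith) (by positivity))
    have hρ1 : ρ ≤ ρ₁ / 16 := by rw [hρdef]; exact min_le_left _ _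
    have hρ2 : ρ ≤ -snd2 qb / 2 := by
      rw [hρdef]; exact le_trans (min_le_right _ _) (min_le_left _ _)
    have hρ3 : ρ ≤ Db / 4 := by
      rw [hρdef]; exact le_trans (min_le_right _ _) (min_le_right _ _)
    -- the constant `τ`
    obtain ⟨τ, hτdef⟩ : ∃ t : ℝ, t = (ρ₁ / 8) ^ 2 / (4 * (Db + ρ₁) ^ 2) := ⟨_, rfl⟩
    have hτpos : 0 < τ := by rw [hτdef]; positivity
    have hτR : τ * (4 * (Db + ρ₁) ^ 2) = (ρ₁ / 8) ^ 2 := by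
      rw [hτdef]; field_simp
    have hτ14 : τ ≤ 1 / 4 := by
      rw [hτdef, div_le_iff₀ (by positivity)]
      have h1 : (ρ₁ / 8) ^ 2 ≤ (Db + ρ₁) ^ 2 :=
        pow_le_pow_left₀ (by positivity) (by linarith) 2
      linarith
    -- the ball lies in the lower half-space
    have hball_neg : ∀ q ∈ Metric.ball qb ρ, snd2 q < 0 := by
      intro q hq
      rw [Metric.mem_ball] at hq
      have h1 := snd2_sub_le_dist q qb
      have h2 := le_abs_self (snd2 q - snd2 qb)
      linarith
    -- `infDist · C` is `1`-Lipschitz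
    have hDqup : ∀ q ∈ Metric.ball qb ρ, Metric.infDist q C ≤ Db + ρ := by
      intro q hq
      rw [Metric.mem_ball] at hq
      have := Metric.infDist_le_infDist_add_dist (x := q) (y := qb) (s := C)
      rw [← hDbdef] at this
      linarith
    have hDqlow : ∀ q ∈ Metric.ball qb ρ, Db - ρ ≤ Metric.infDist q C := by
      intro q hq
      rw [Metric.mem_ball] at hq
      have := Metric.infDist_le_infDist_add_dist (x := qb) (y := q) (s := C)
      rw [← hDbdef, dist_comm] at this
      linarith
    -- horizontal offset on the ball
    have hoffB : ∀ q ∈ Metric.ball qb ρ, ∀ c ∈ C,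
        dist q c ≤ Metric.infDist q C + ρ₁ / 8 → ρ₁ / 8 ≤ dist (fst2 q) (fst2 c) := by
      intro q hq c hc hclose
      have hqb : dist q qb < ρ := Metric.mem_ball.1 hq
      have h1 : dist qb c ≤ Db + ρ₁ / 4 := by
        have htr := dist_triangle qb q c
        have h2 := hDqup q hq
        have h3 : dist qb q < ρ := by rwa [dist_comm]
        linarith
      have h4 := hoff c hc h1
      have h5 := dist_triangle (fst2 qb) (fst2 q) (fst2 c)
      have h6 : dist (fst2 qb) (fst2 q) ≤ dist qb q := dist_fst2_le_dist qb q
      have h7 : dist qb q < ρ := by rwa [dist_comm]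
      linarith
    -- the key increment estimate in the vertical direction
    have hinc : ∀ q ∈ Metric.ball qb ρ, ∀ t : ℝ, 0 < t → t ≤ ρ₁ / 8 →
        Metric.infDist q C + (τ - 1) * t ≤ Metric.infDist (mk2 (fst2 q) (snd2 q + t)) C := by
      intro q hq t ht0 htle
      refine le_infDist' hne fun c hc => ?_
      have hqqh : dist q (mk2 (fst2 q) (snd2 q + t)) = t := by
        have h1 := dist_mk2_vert (fst2 q) (snd2 q) (snd2 q + t)
        rw [mk2_eta] at h1
        rw [h1, show snd2 q - (snd2 q + t) = -t by ring, abs_neg, abs_of_pos ht0]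
      have hτt : τ * t ≤ ρ₁ / 8 := by
        have h1 : τ * t ≤ (1 / 4) * t := mul_le_mul_of_nonneg_right hτ14 ht0.le
        linarith
      rcases le_or_gt (dist q c) (Metric.infDist q C + ρ₁ / 8) with hnear | hfar
      · -- near case
        have hd1 := hoffB q hq c hc hnear
        have e1 : dist q c ^ 2 = dist (fst2 q) (fst2 c) ^ 2 + (snd2 q - snd2 c) ^ 2 :=
          dist_sq_l2 q c
        have e2 : dist (mk2 (fst2 q) (snd2 q + t)) c ^ 2
            = dist (fst2 q) (fst2 c) ^ 2 + (snd2 q + t - snd2 c) ^ 2 := dist_sq_l2 _ c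
        have hu : 0 < snd2 c - snd2 q := by
          have h1 := hsub hc; simp only [Set.mem_setOf_eq] at h1
          have h2 := hball_neg q hq
          linarith
        have hrlow : Metric.infDist q C ≤ dist q c := Metric.infDist_le_dist_of_mem hc
        have hDl := hDqlow q hq
        have hDu := hDqup q hq
        have hrup : dist q c ≤ Db + ρ₁ := by linarith
        have hrpos : 0 < dist q c := by linarith
        have hrh : t ≤ dist q c := by linarith
        have ha2 : (ρ₁ / 8) ^ 2 ≤ dist (fst2 q) (fst2 c) ^ 2 :=
          pow_le_pow_left₀ (by positivity) hd1 2
        have step1 : 2 * dist q c * (snd2 c - snd2 q) ≤ 2 * dist q c ^ 2 - (ρ₁ / 8) ^ 2 := by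
          nlinarith [e1, ha2, sq_nonneg (dist q c - (snd2 c - snd2 q))]
        have hr2R : dist q c ^ 2 ≤ (Db + ρ₁) ^ 2 := pow_le_pow_left₀ hrpos.le hrup 2
        have m1 : dist q c * (dist q c - t) ≤ (Db + ρ₁) ^ 2 := by
          nlinarith [hr2R, mul_nonneg hrpos.le ht0.le]
        have m2 : t * dist q c ≤ (Db + ρ₁) ^ 2 := by
          have htR : t ≤ Db + ρ₁ := by linarith
          have := mul_le_mul htR hrup hrpos.le (by positivity : (0:ℝ) ≤ Db + ρ₁)
          nlinarith [this]
        have k1 : 2 * τ * (dist q c * (dist q c - t)) ≤ 2 * τ * (Db + ρ₁) ^ 2 :=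
          mul_le_mul_of_nonneg_left m1 (by positivity)
        have k2 : τ ^ 2 * (t * dist q c) ≤ (τ * (1 / 4)) * (Db + ρ₁) ^ 2 := by
          have hτsq : τ ^ 2 ≤ τ * (1 / 4) := by nlinarith [hτpos, hτ14]
          have hm2' : 0 ≤ t * dist q c := by positivity
          calc τ ^ 2 * (t * dist q c) ≤ (τ * (1 / 4)) * (t * dist q c) :=
                mul_le_mul_of_nonneg_right hτsq hm2'
            _ ≤ (τ * (1 / 4)) * (Db + ρ₁) ^ 2 :=
                mul_le_mul_of_nonneg_left m2 (by positivity)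
        have key : 2 * τ * (dist q c * (dist q c - t)) + τ ^ 2 * (t * dist q c)
            ≤ (ρ₁ / 8) ^ 2 := by
          have hA : (0:ℝ) ≤ τ * (Db + ρ₁) ^ 2 := by positivity
          linarith [k1, k2, hτR, hA]
        have k3 : t * (2 * τ * (dist q c * (dist q c - t)) + τ ^ 2 * (t * dist q c))
            ≤ t * ((ρ₁ / 8) ^ 2) := mul_le_mul_of_nonneg_left key ht0.le
        have k4 : t * ((ρ₁ / 8) ^ 2)
            ≤ t * (2 * dist q c ^ 2 - 2 * dist q c * (snd2 c - snd2 q)) :=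
          mul_le_mul_of_nonneg_left (by linarith [step1]) ht0.le
        have eA : dist (mk2 (fst2 q) (snd2 q + t)) c ^ 2
            = dist q c ^ 2 - 2 * t * (snd2 c - snd2 q) + t ^ 2 := by
          rw [e2]; linear_combination -e1
        have hident : dist q c * (dist (mk2 (fst2 q) (snd2 q + t)) c ^ 2)
            - dist q c * ((dist q c - t + τ * t) ^ 2)
            = t * (2 * dist q c ^ 2 - 2 * dist q c * (snd2 c - snd2 q))
              - t * (2 * τ * (dist q c * (dist q c - t)) + τ ^ 2 * (t * dist q c)) := by
          rw [eA]; ring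
        have hsqr : dist q c * ((dist q c - t + τ * t) ^ 2)
            ≤ dist q c * (dist (mk2 (fst2 q) (snd2 q + t)) c ^ 2) := by
          linarith [hident, k3, k4]
        have hsq : (dist q c - t + τ * t) ^ 2 ≤ dist (mk2 (fst2 q) (snd2 q + t)) c ^ 2 :=
          le_of_mul_le_mul_left hsqr hrpos
        have final : dist q c - t + τ * t ≤ dist (mk2 (fst2 q) (snd2 q + t)) c :=
          le_of_sq_le_sq'' hsq dist_nonneg
        linarith
      · -- far case
        have htr := dist_triangle q (mk2 (fst2 q) (snd2 q + t)) c
        rw [hqqh] at htr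
        linarith
    -- pointwise lower bound on the slope
    have hlip : ∀ q ∈ Metric.ball qb ρ,
        ENNReal.ofReal τ ≤ lipConst (fun q' => Metric.infDist q' C + snd2 q') q := by
      intro q hq
      have hseq : ∀ n : ℕ, (fun y => ENNReal.ofReal τ ≤ ENNReal.ofReal
          (|(Metric.infDist q C + snd2 q) - (Metric.infDist y C + snd2 y)| / dist q y))
          (mk2 (fst2 q) (snd2 q + ρ₁ / 8 / ((n : ℝ) + 1))) := by
        intro n
        have hn1 : (0:ℝ) < (n : ℝ) + 1 := by positivity
        obtain ⟨t, htdef⟩ : ∃ t : ℝ, t = ρ₁ / 8 / ((n : ℝ) + 1) := ⟨_, rfl⟩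
        have ht0 : 0 < t := by rw [htdef]; positivity
        have htle : t ≤ ρ₁ / 8 := by
          rw [htdef]
          exact div_le_self (by positivity) (by linarith)
        have hI := hinc q hq t ht0 htle
        have hqqh : dist q (mk2 (fst2 q) (snd2 q + t)) = t := by
          have h1 := dist_mk2_vert (fst2 q) (snd2 q) (snd2 q + t)
          rw [mk2_eta] at h1
          rw [h1, show snd2 q - (snd2 q + t) = -t by ring, abs_neg, abs_of_pos ht0]
        have hsnd' : snd2 (mk2 (fst2 q) (snd2 q + t)) = snd2 q + t := rfl
        have hdiff : τ * t ≤ (Metric.infDist (mk2 (fst2 q) (snd2 q + t)) C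
            + snd2 (mk2 (fst2 q) (snd2 q + t))) - (Metric.infDist q C + snd2 q) := by
          rw [hsnd']
          linarith
        have habs : τ * t ≤ |(Metric.infDist q C + snd2 q)
            - (Metric.infDist (mk2 (fst2 q) (snd2 q + t)) C
              + snd2 (mk2 (fst2 q) (snd2 q + t)))| := by
          refine le_trans hdiff ?_
          rw [abs_sub_comm]
          exact le_abs_self _
        have hquot : τ ≤ |(Metric.infDist q C + snd2 q)
            - (Metric.infDist (mk2 (fst2 q) (snd2 q + t)) C
              + snd2 (mk2 (fst2 q) (snd2 q + t)))| / dist q (mk2 (fst2 q) (snd2 q + t)) := by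
          rw [hqqh, le_div_iff₀ ht0]
          exact habs
        rw [← htdef]
        exact ENNReal.ofReal_le_ofReal hquot
      have htend : Filter.Tendsto (fun n : ℕ => mk2 (fst2 q) (snd2 q + ρ₁ / 8 / ((n : ℝ) + 1)))
          atTop (𝓝[≠] q) := by
        apply tendsto_nhdsWithin_of_tendsto_nhds_of_eventually_within
        · rw [tendsto_iff_dist_tendsto_zero]
          have heq : (fun n : ℕ => dist (mk2 (fst2 q) (snd2 q + ρ₁ / 8 / ((n : ℝ) + 1))) q)
              = fun n : ℕ => ρ₁ / 8 * (1 / ((n : ℝ) + 1)) := by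
            funext n
            have hn1 : (0:ℝ) < (n : ℝ) + 1 := by positivity
            have h1 := dist_mk2_vert (fst2 q) (snd2 q + ρ₁ / 8 / ((n : ℝ) + 1)) (snd2 q)
            rw [mk2_eta] at h1
            rw [h1, show snd2 q + ρ₁ / 8 / ((n : ℝ) + 1) - snd2 q = ρ₁ / 8 / ((n : ℝ) + 1)
              by ring, abs_of_pos (by positivity)]
            ring
          rw [heq]
          have := tendsto_one_div_add_atTop_nhds_zero_nat.const_mul (ρ₁ / 8)
          simpa using this
        · refine Filter.Eventually.of_forall fun n => ?_
          intro hmem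
          simp only [Set.mem_singleton_iff] at hmem
          have hn1 : (0:ℝ) < (n : ℝ) + 1 := by positivity
          have := congrArg snd2 hmem
          have hsnd' : snd2 (mk2 (fst2 q) (snd2 q + ρ₁ / 8 / ((n : ℝ) + 1)))
              = snd2 q + ρ₁ / 8 / ((n : ℝ) + 1) := rfl
          rw [hsnd'] at this
          have : ρ₁ / 8 / ((n : ℝ) + 1) = 0 := by linarith
          have h2 : (0:ℝ) < ρ₁ / 8 / ((n : ℝ) + 1) := by positivity
          linarith
      have hfreq : ∃ᶠ y in (𝓝[≠] q), ENNReal.ofReal τ ≤ ENNReal.ofReal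
          (|(Metric.infDist q C + snd2 q) - (Metric.infDist y C + snd2 y)| / dist q y) :=
        htend.frequently (Filter.Frequently.of_forall hseq)
      exact le_limsup_of_frequently_le' hfreq
    refine ⟨qb, ρ, τ, hρpos, hτpos, fun q hq => hball_neg q hq, ?_⟩
    exact (ae_restrict_iff' measurableSet_ball).2 (ae_of_all _ fun q hq => hlip q hq)

end HalfSpaceRCD
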